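/- arXiv:1809.10767 — 2 statements merged into one kernel-verified Lean document; each statement's English description precedes it below -/
import Mathlib

section
/- Let G and H be connected modular graphs, each with at least 3 vertices. Then SW_3(G □ H) = (|V(G)|·|V(H)| − 2) · ( (|V(G)|²/(|V(H)| − 2)) · SW_3(H) + (|V(H)|²/(|V(G)| − 2)) · SW_3(G) ). -/
/-- The Steiner distance of a set `S` of vertices of `G`: the minimum number of edges
of a connected subgraph of `G` containing all vertices of `S`. -/
noncomputable def steinerDist {V : Type*} (G : SimpleGraph V) (S : Set V) : ℕ :=
  sInf {n | ∃ H : G.Subgraph, H.Connected ∧ S ⊆ H.verts ∧ H.edgeSet.ncard = n}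
/-- The Steiner `k`-Wiener index of `G`: the sum of the Steiner distances of all
`k`-element subsets of vertices of `G`. -/
noncomputable def steinerWiener {V : Type*} (G : SimpleGraph V) [Fintype V] (k : ℕ) : ℕ :=
  ∑ S ∈ (Finset.univ : Finset V).powersetCard k, steinerDist G (S : Set V)
/-- The interval `I(u,v)`: the set of all vertices lying on shortest `u,v`-paths. -/
def interval {V : Type*} (G : SimpleGraph V) (u v : V) : Set V :=
  {x | G.dist u x + G.dist x v = G.dist u v}
/-- A graph `G` is modular if for every three vertices `x, y, z` some vertex lies
simultaneously on shortest paths between every two of them. -/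
def IsModular {V : Type*} (G : SimpleGraph V) : Prop :=
  ∀ x y z : V, (interval G x y ∩ interval G x z ∩ interval G y z).Nonempty

open SimpleGraph

section Aux

variable {V : Type*}


private lemma dist_triangle' (K : SimpleGraph V) {x w y : V} (h1 : K.Reachable x w)
    (h2 : K.Reachable w y) : K.dist x y ≤ K.dist x w + K.dist w y := by
  obtain ⟨p, hp⟩ := h1.exists_walk_length_eq_dist
  obtain ⟨q, hq⟩ := h2.exists_walk_length_eq_dist
  calc K.dist x y ≤ (p.append q).length := K.dist_le _
    _ = K.dist x w + K.dist w y := by rw [Walk.length_append, hp, hq]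

private lemma dist_split (K : SimpleGraph V) {x y w : V} (p : K.Walk x y)
    (hp : p.length = K.dist x y) (hw : w ∈ p.support) :
    K.dist x w + K.dist w y = K.dist x y := by
  classical
  have h1 : K.dist x w ≤ (p.takeUntil w hw).length := K.dist_le _
  have h2 : K.dist w y ≤ (p.dropUntil w hw).length := K.dist_le _
  have hlen : (p.takeUntil w hw).length + (p.dropUntil w hw).length = p.length := by
    rw [← Walk.length_append, Walk.take_spec]
  have := dist_triangle' K ⟨p.takeUntil w hw⟩ ⟨p.dropUntil w hw⟩
  omega

private lemma triple_le_card [Fintype V] (K : SimpleGraph V) (hc : K.Preconnected)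
    (x y z : V) : K.dist x y + K.dist x z + K.dist y z + 2 ≤ 2 * Fintype.card V := by
  classical
  obtain ⟨p, hp⟩ := (hc x y).exists_walk_length_eq_dist
  -- w : vertex on p minimizing dist to z
  obtain ⟨w, hwmem, hwmin⟩ := Finset.exists_min_image p.support.toFinset (fun v => K.dist z v)
    ⟨x, by simp⟩
  rw [List.mem_toFinset] at hwmem
  obtain ⟨q, hq⟩ := (hc z w).exists_walk_length_eq_dist
  have hpPath : p.IsPath := p.isPath_of_length_eq_dist hp
  have hqPath : q.IsPath := q.isPath_of_length_eq_dist hq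
  -- disjointness of supports away from w
  have hdisj : ∀ v ∈ q.support.toFinset, v ∈ p.support.toFinset → v = w := by
    intro v hv hvp
    rw [List.mem_toFinset] at hv hvp
    have h1 : K.dist z v + K.dist v w = K.dist z w := dist_split K q hq hv
    have h2 : K.dist z w ≤ K.dist z v := hwmin v (List.mem_toFinset.2 hvp)
    have h3 : K.dist v w = 0 := by omega
    have : K.Reachable v w := ⟨q.dropUntil v hv⟩
    exact (this.dist_eq_zero_iff.mp h3)
  -- cardinality count
  have hcardp : p.support.toFinset.card = p.length + 1 := by
    rw [List.toFinset_card_of_nodup hpPath.support_nodup, Walk.length_support]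
  have hcardq : q.support.toFinset.card = q.length + 1 := by
    rw [List.toFinset_card_of_nodup hqPath.support_nodup, Walk.length_support]
  have hdisj2 : Disjoint (q.support.toFinset.erase w) p.support.toFinset := by
    rw [Finset.disjoint_left]
    intro v hv hvp
    rw [Finset.mem_erase] at hv
    exact hv.1 (hdisj v hv.2 hvp)
  have hcard : (q.support.toFinset.erase w).card + p.support.toFinset.card ≤ Fintype.card V := by
    rw [← Finset.card_union_of_disjoint hdisj2]
    exact Finset.card_le_card (Finset.subset_univ _) |>.trans_eq (Finset.card_univ)
  have hwq : w ∈ q.support.toFinset := by simp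
  have hcard' : q.length + (p.length + 1) ≤ Fintype.card V := by
    have := Finset.card_erase_of_mem hwq
    omega
  -- distance estimates
  have hxw : K.dist x w + K.dist w y = K.dist x y := dist_split K p hp hwmem
  have hxz : K.dist x z ≤ K.dist x w + K.dist w z :=
    dist_triangle' K ⟨p.takeUntil w hwmem⟩ ⟨q.reverse⟩
  have hyz : K.dist y z ≤ K.dist y w + K.dist w z := by
    have : K.Reachable y w := ⟨(p.dropUntil w hwmem).reverse⟩
    exact dist_triangle' K this ⟨q.reverse⟩
  have hyw : K.dist y w = K.dist w y := dist_comm ..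
  have hwz : K.dist w z = K.dist z w := dist_comm ..
  omega


private lemma card_le_ncard_edges [Fintype V] (K : SimpleGraph V) (hc : K.Preconnected)
    (r : V) : Fintype.card V ≤ K.edgeSet.ncard + 1 := by
  classical
  have key : ∀ v : V, v ≠ r → ∃ u, K.Adj v u ∧ K.dist u r < K.dist v r := by
    intro v hv
    obtain ⟨q, hq⟩ := (hc v r).exists_walk_length_eq_dist
    have hd : K.dist v r ≠ 0 := by
      rw [dist_ne_zero_iff_ne_and_reachable]; exact ⟨hv, hc v r⟩
    cases q with
    | nil => simp at hq; simp at hd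
    | @cons _ u _ h q' =>
      refine ⟨u, h, ?_⟩
      have : K.dist u r ≤ q'.length := K.dist_le _
      simp [Walk.length_cons] at hq
      omega
  choose f hf1 hf2 using key
  set g : {v : V // v ≠ r} → K.edgeSet :=
    fun v => ⟨s(v.1, f v.1 v.2), (hf1 v.1 v.2)⟩ with hg
  have hinj : Function.Injective g := by
    rintro ⟨v, hv⟩ ⟨v', hv'⟩ h
    simp only [hg, Subtype.mk_eq_mk, Sym2.eq_iff] at h
    replace h := congrArg Subtype.val h
    simp only [Sym2.eq_iff] at h
    rcases h with ⟨h1, h2⟩ | ⟨h1, h2⟩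
    · exact Subtype.ext h1
    · exfalso
      have a1 := hf2 v hv
      have a2 := hf2 v' hv'
      rw [h2] at a1
      rw [← h1] at a2
      omega
  have := Nat.card_le_card_of_injective g hinj
  rw [Nat.card_eq_fintype_card] at this
  have hcards : Fintype.card {v : V // v ≠ r} = Fintype.card V - 1 := by
    rw [Fintype.card_subtype_compl, Fintype.card_subtype_eq]
  have hnc : Nat.card K.edgeSet = K.edgeSet.ncard := rfl
  have hpos : 0 < Fintype.card V := Fintype.card_pos_iff.mpr ⟨r⟩
  omega


private lemma dist_le_subgraph_dist [Fintype V] {K : SimpleGraph V} (Hs : K.Subgraph)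
    (hc : Hs.Connected) {x y : V} (hx : x ∈ Hs.verts) (hy : y ∈ Hs.verts) :
    K.dist x y ≤ Hs.coe.dist ⟨x, hx⟩ ⟨y, hy⟩ := by
  obtain ⟨p, hp⟩ := (hc.coe.preconnected ⟨x, hx⟩ ⟨y, hy⟩).exists_walk_length_eq_dist
  calc K.dist x y ≤ (p.map Hs.hom).length := K.dist_le _
    _ = _ := by rw [Walk.length_map, hp]

private lemma lower_bound [Fintype V] (K : SimpleGraph V) (x y z : V) (Hs : K.Subgraph)
    (hc : Hs.Connected) (hx : x ∈ Hs.verts) (hy : y ∈ Hs.verts) (hz : z ∈ Hs.verts) :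
    K.dist x y + K.dist x z + K.dist y z ≤ 2 * Hs.edgeSet.ncard := by
  classical
  haveI : Fintype ↥Hs.verts := Fintype.ofFinite _
  have h1 := triple_le_card Hs.coe hc.coe.preconnected ⟨x, hx⟩ ⟨y, hy⟩ ⟨z, hz⟩
  have h2 := card_le_ncard_edges Hs.coe hc.coe.preconnected ⟨x, hx⟩
  have h3 : Hs.coe.edgeSet.ncard = Hs.edgeSet.ncard := by
    rw [← Hs.image_coe_edgeSet_coe, Set.ncard_image_of_injective _
      (Sym2.map.injective Subtype.val_injective)]
  have d1 := dist_le_subgraph_dist Hs hc hx hy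
  have d2 := dist_le_subgraph_dist Hs hc hx hz
  have d3 := dist_le_subgraph_dist Hs hc hy hz
  omega

private lemma walk_toSubgraph_ncard_le {K : SimpleGraph V} {u v : V} (p : K.Walk u v) :
    p.toSubgraph.edgeSet.ncard ≤ p.length := by
  classical
  rw [Walk.edgeSet_toSubgraph]
  have : p.edgeSet = ↑p.edges.toFinset := by ext e; simp
  rw [this, Set.ncard_coe_finset]
  calc p.edges.toFinset.card ≤ p.edges.length := p.edges.toFinset_card_le
    _ = p.length := p.length_edges

private lemma steiner_eq [Fintype V] (K : SimpleGraph V) (hc : K.Connected)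
    (x y z m : V) (h1 : K.dist x m + K.dist m y = K.dist x y)
    (h2 : K.dist x m + K.dist m z = K.dist x z)
    (h3 : K.dist y m + K.dist m z = K.dist y z) :
    2 * steinerDist K {x, y, z} = K.dist x y + K.dist x z + K.dist y z := by
  classical
  obtain ⟨p1, hp1⟩ := hc.exists_walk_length_eq_dist x m
  obtain ⟨p2, hp2⟩ := hc.exists_walk_length_eq_dist y m
  obtain ⟨p3, hp3⟩ := hc.exists_walk_length_eq_dist z m
  set Sub : K.Subgraph := p1.toSubgraph ⊔ p2.toSubgraph ⊔ p3.toSubgraph with hSub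
  have hconn : Sub.Connected := by
    refine Subgraph.connected_sup (Subgraph.connected_sup p1.toSubgraph_connected.preconnected
      p2.toSubgraph_connected.preconnected ?_).preconnected p3.toSubgraph_connected.preconnected ?_
    · exact ⟨m, by simp [Subgraph.verts_inf, p1.end_mem_verts_toSubgraph,
        p2.end_mem_verts_toSubgraph]⟩
    · exact ⟨m, by simp [Subgraph.verts_inf, Subgraph.verts_sup,
        p1.end_mem_verts_toSubgraph, p3.end_mem_verts_toSubgraph]⟩
  have hsubS : ({x, y, z} : Set V) ⊆ Sub.verts := by
    intro v hv
    simp only [Set.mem_insert_iff, Set.mem_singleton_iff] at hv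
    rcases hv with rfl | rfl | rfl
    · simp [hSub, Subgraph.verts_sup]
    · simp [hSub, Subgraph.verts_sup]
    · simp [hSub, Subgraph.verts_sup]
  have hncard : Sub.edgeSet.ncard ≤ K.dist x m + K.dist y m + K.dist z m := by
    have e1 := walk_toSubgraph_ncard_le p1
    have e2 := walk_toSubgraph_ncard_le p2
    have e3 := walk_toSubgraph_ncard_le p3
    have u1 := Set.ncard_union_le (p1.toSubgraph ⊔ p2.toSubgraph).edgeSet p3.toSubgraph.edgeSet
    have u2 := Set.ncard_union_le p1.toSubgraph.edgeSet p2.toSubgraph.edgeSet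
    rw [hSub]
    rw [Subgraph.edgeSet_sup, Subgraph.edgeSet_sup] at *
    omega
  -- upper bound
  have hub : steinerDist K {x, y, z} ≤ K.dist x m + K.dist y m + K.dist z m := by
    refine le_trans (Nat.sInf_le ⟨Sub, hconn, hsubS, rfl⟩) hncard
  -- lower bound
  have hmem : steinerDist K {x, y, z} ∈
      {n | ∃ H : K.Subgraph, H.Connected ∧ ({x, y, z} : Set V) ⊆ H.verts ∧ H.edgeSet.ncard = n} :=
    Nat.sInf_mem ⟨Sub.edgeSet.ncard, Sub, hconn, hsubS, rfl⟩
  obtain ⟨Hs, hcs, hss, hes⟩ := hmem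
  have hlb := lower_bound K x y z Hs hcs (hss (by simp)) (hss (by simp)) (hss (by simp))
  rw [hes] at hlb
  have c1 : K.dist m y = K.dist y m := dist_comm ..
  have c2 : K.dist m z = K.dist z m := dist_comm ..
  omega

end Aux

section BoxAux

variable {α β : Type*} {G : SimpleGraph α} {H : SimpleGraph β}

private lemma le_walk_length (hG : G.Connected) (hH : H.Connected) {p q : α × β}
    (w : (G □ H).Walk p q) : G.dist p.1 q.1 + H.dist p.2 q.2 ≤ w.length := by
  induction w with
  | nil => simp
  | @cons p v q h w ih =>
    rw [Walk.length_cons]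
    rcases h with ⟨ha, he⟩ | ⟨ha, he⟩
    · have t : G.dist p.1 q.1 ≤ 1 + G.dist v.1 q.1 := by
        obtain ⟨r, hr⟩ := hG.exists_walk_length_eq_dist v.1 q.1
        calc G.dist p.1 q.1 ≤ (Walk.cons ha r).length := G.dist_le _
          _ = 1 + G.dist v.1 q.1 := by rw [Walk.length_cons]; omega
      have t2 : H.dist p.2 q.2 = H.dist v.2 q.2 := by rw [he]
      omega
    · have t : H.dist p.2 q.2 ≤ 1 + H.dist v.2 q.2 := by
        obtain ⟨r, hr⟩ := hH.exists_walk_length_eq_dist v.2 q.2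
        calc H.dist p.2 q.2 ≤ (Walk.cons ha r).length := H.dist_le _
          _ = 1 + H.dist v.2 q.2 := by rw [Walk.length_cons]; omega
      have t2 : G.dist p.1 q.1 = G.dist v.1 q.1 := by rw [he]
      omega

private lemma boxProd_dist (hG : G.Connected) (hH : H.Connected) (p q : α × β) :
    (G □ H).dist p q = G.dist p.1 q.1 + H.dist p.2 q.2 := by
  refine le_antisymm ?_ ?_
  · obtain ⟨w1, hw1⟩ := hG.exists_walk_length_eq_dist p.1 q.1
    obtain ⟨w2, hw2⟩ := hH.exists_walk_length_eq_dist p.2 q.2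
    have hw : ((w1.boxProdLeft H p.2).append (w2.boxProdRight G q.1) :
        (G □ H).Walk (p.1, p.2) (q.1, q.2)).length = G.dist p.1 q.1 + H.dist p.2 q.2 := by
      rw [Walk.length_append, show (w1.boxProdLeft H p.2).length = w1.length from Walk.length_map _ _,
        show (w2.boxProdRight G q.1).length = w2.length from Walk.length_map _ _, hw1, hw2]
    calc (G □ H).dist p q = (G □ H).dist (p.1, p.2) (q.1, q.2) := by rw [Prod.mk.eta, Prod.mk.eta]
      _ ≤ _ := hw ▸ SimpleGraph.dist_le _
  · obtain ⟨w, hw⟩ := (hG.boxProd hH).exists_walk_length_eq_dist p q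
    rw [← hw]; exact le_walk_length hG hH w

end BoxAux

section Aux2
variable {V : Type*}

private lemma count_pairs [Fintype V] [DecidableEq V] {u v : V} (h : u ≠ v) :
    ((Finset.univ.powersetCard 3).filter (fun S => u ∈ S ∧ v ∈ S)).card
      = Fintype.card V - 2 := by
  have hcard2 : ({u, v} : Finset V).card = 2 := by
    rw [Finset.card_insert_of_notMem (by simp [h]), Finset.card_singleton]
  have key : ((Finset.univ.powersetCard 3).filter (fun S => u ∈ S ∧ v ∈ S)).card
      = ((Finset.univ \ {u, v}).powersetCard 1).card := by
    refine Finset.card_bij' (fun S _ => S \ {u, v}) (fun T _ => T ∪ {u, v}) ?_ ?_ ?_ ?_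
    · intro S hS
      rw [Finset.mem_filter, Finset.mem_powersetCard] at hS
      obtain ⟨⟨_, hc⟩, hu, hv⟩ := hS
      rw [Finset.mem_powersetCard]
      constructor
      · intro a ha; rw [Finset.mem_sdiff] at ha ⊢; exact ⟨Finset.mem_univ a, ha.2⟩
      · rw [Finset.card_sdiff_of_subset (by intro a ha; simp at ha; rcases ha with rfl|rfl <;> assumption)]
        rw [hcard2, hc]
    · intro T hT
      rw [Finset.mem_powersetCard] at hT
      obtain ⟨hsub, hc⟩ := hT
      have hdisj : Disjoint T {u, v} := by
        rw [Finset.disjoint_right]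
        intro a ha hat
        have := hsub hat
        rw [Finset.mem_sdiff] at this
        exact this.2 ha
      rw [Finset.mem_filter, Finset.mem_powersetCard]
      refine ⟨⟨Finset.subset_univ _, ?_⟩, ?_, ?_⟩
      · rw [Finset.card_union_of_disjoint hdisj, hc, hcard2]
      · simp
      · simp
    · intro S hS
      rw [Finset.mem_filter] at hS
      exact Finset.sdiff_union_of_subset (by
        intro a ha; simp at ha; rcases ha with rfl|rfl
        exacts [hS.2.1, hS.2.2])
    · intro T hT
      rw [Finset.mem_powersetCard] at hT
      ext a
      simp only [Finset.mem_sdiff, Finset.mem_union]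
      constructor
      · rintro ⟨h1 | h1, h2⟩
        · exact h1
        · exact absurd h1 h2
      · intro ha
        refine ⟨Or.inl ha, ?_⟩
        have := hT.1 ha
        rw [Finset.mem_sdiff] at this
        exact this.2
  rw [key, Finset.card_powersetCard, Finset.card_sdiff_of_subset (Finset.subset_univ _), hcard2,
    Finset.card_univ, Nat.choose_one_right]


private lemma four_sw [Fintype V] (K : SimpleGraph V) (hc : K.Connected)
    (hmed : ∀ x y z : V, ∃ m, K.dist x m + K.dist m y = K.dist x y ∧
      K.dist x m + K.dist m z = K.dist x z ∧ K.dist y m + K.dist m z = K.dist y z) :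
    4 * steinerWiener K 3 = (Fintype.card V - 2) * ∑ u : V, ∑ v : V, K.dist u v := by
  classical
  have step1 : ∀ S ∈ (Finset.univ : Finset V).powersetCard 3,
      4 * steinerDist K ↑S = ∑ u ∈ S, ∑ v ∈ S, K.dist u v := by
    intro S hS
    rw [Finset.mem_powersetCard] at hS
    obtain ⟨x, y, z, hxy, hxz, hyz, rfl⟩ := Finset.card_eq_three.mp hS.2
    obtain ⟨m, h1, h2, h3⟩ := hmed x y z
    have hse := steiner_eq K hc x y z m h1 h2 h3
    have hcoe : (↑({x, y, z} : Finset V) : Set V) = {x, y, z} := by simp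
    rw [hcoe]
    have hx : x ∉ ({y, z} : Finset V) := by simp [hxy, hxz]
    have hy : y ∉ ({z} : Finset V) := by simp [hyz]
    simp only [Finset.sum_insert hx, Finset.sum_insert hy, Finset.sum_singleton]
    have e1 : K.dist x x = 0 := by simp
    have e2 : K.dist y y = 0 := by simp
    have e3 : K.dist z z = 0 := by simp
    have c1 : K.dist y x = K.dist x y := dist_comm ..
    have c2 : K.dist z x = K.dist x z := dist_comm ..
    have c3 : K.dist z y = K.dist y z := dist_comm ..
    omega
  calc 4 * steinerWiener K 3
      = ∑ S ∈ (Finset.univ : Finset V).powersetCard 3, 4 * steinerDist K ↑S := by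
        rw [steinerWiener, Finset.mul_sum]
    _ = ∑ S ∈ (Finset.univ : Finset V).powersetCard 3, ∑ u ∈ S, ∑ v ∈ S, K.dist u v :=
        Finset.sum_congr rfl step1
    _ = ∑ S ∈ (Finset.univ : Finset V).powersetCard 3, ∑ u : V, ∑ v : V,
          (if u ∈ S ∧ v ∈ S then K.dist u v else 0) := by
        refine Finset.sum_congr rfl fun S _ => ?_
        simp only [ite_and]
        have key : ∀ u : V, (∑ v : V, if u ∈ S then if v ∈ S then K.dist u v else 0 else 0)
            = (if u ∈ S then ∑ v ∈ S, K.dist u v else 0) := by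
          intro u
          by_cases h : u ∈ S
          · simp only [if_pos h]
            rw [Finset.sum_ite_mem, Finset.univ_inter]
          · simp [h]
        rw [Finset.sum_congr rfl fun u (_ : u ∈ Finset.univ) => key u,
          Finset.sum_ite_mem, Finset.univ_inter]
    _ = ∑ u : V, ∑ v : V, ∑ S ∈ (Finset.univ : Finset V).powersetCard 3,
          (if u ∈ S ∧ v ∈ S then K.dist u v else 0) := by
        rw [Finset.sum_comm]
        exact Finset.sum_congr rfl fun u _ => Finset.sum_comm
    _ = ∑ u : V, ∑ v : V, (Fintype.card V - 2) * K.dist u v := by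
        refine Finset.sum_congr rfl fun u _ => Finset.sum_congr rfl fun v _ => ?_
        rw [Finset.sum_ite, Finset.sum_const, Finset.sum_const_zero, add_zero, smul_eq_mul]
        by_cases huv : u = v
        · subst huv; simp
        · rw [count_pairs huv]
    _ = (Fintype.card V - 2) * ∑ u : V, ∑ v : V, K.dist u v := by
        rw [Finset.mul_sum]
        exact Finset.sum_congr rfl fun u _ => (Finset.mul_sum _ _ _).symm

end Aux2

/-- For connected modular graphs `G` and `H`, each with at least three vertices,
`SW_3(G □ H) = (|V(G)|·|V(H)| − 2)·(|V(G)|²/(|V(H)| − 2)·SW_3(H) +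
|V(H)|²/(|V(G)| − 2)·SW_3(G))`. -/
theorem steinerWiener_three_boxProd {α β : Type*} (G : SimpleGraph α)
    (H : SimpleGraph β) [Fintype α] [Fintype β] (hG : G.Connected) (hH : H.Connected)
    (hGm : IsModular G) (hHm : IsModular H)
    (hGcard : 3 ≤ Fintype.card α) (hHcard : 3 ≤ Fintype.card β) :
    (steinerWiener (G.boxProd H) 3 : ℝ) =
      ((Fintype.card α : ℝ) * Fintype.card β - 2) *
        ((Fintype.card α : ℝ) ^ 2 / ((Fintype.card β : ℝ) - 2) * steinerWiener H 3 +
          (Fintype.card β : ℝ) ^ 2 / ((Fintype.card α : ℝ) - 2) * steinerWiener G 3) := by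
  classical
  have hGmed : ∀ x y z : α, ∃ m, G.dist x m + G.dist m y = G.dist x y ∧
      G.dist x m + G.dist m z = G.dist x z ∧ G.dist y m + G.dist m z = G.dist y z := by
    intro x y z
    obtain ⟨m, hm⟩ := hGm x y z
    exact ⟨m, hm.1.1, hm.1.2, hm.2⟩
  have hHmed : ∀ x y z : β, ∃ m, H.dist x m + H.dist m y = H.dist x y ∧
      H.dist x m + H.dist m z = H.dist x z ∧ H.dist y m + H.dist m z = H.dist y z := by
    intro x y z
    obtain ⟨m, hm⟩ := hHm x y z
    exact ⟨m, hm.1.1, hm.1.2, hm.2⟩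
  have hPconn : (G □ H).Connected := hG.boxProd hH
  have bpd := boxProd_dist hG hH
  have hPmed : ∀ x y z : α × β, ∃ m, (G □ H).dist x m + (G □ H).dist m y = (G □ H).dist x y ∧
      (G □ H).dist x m + (G □ H).dist m z = (G □ H).dist x z ∧
      (G □ H).dist y m + (G □ H).dist m z = (G □ H).dist y z := by
    intro x y z
    obtain ⟨mg, hg1, hg2, hg3⟩ := hGmed x.1 y.1 z.1
    obtain ⟨mh, hh1, hh2, hh3⟩ := hHmed x.2 y.2 z.2
    refine ⟨(mg, mh), ?_, ?_, ?_⟩ <;> simp only [bpd] <;> omega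
  have hA := four_sw (G □ H) hPconn hPmed
  have hB := four_sw G hG hGmed
  have hC := four_sw H hH hHmed
  have hD : (∑ u : α × β, ∑ v : α × β, (G □ H).dist u v)
      = (Fintype.card β)^2 * (∑ u : α, ∑ v : α, G.dist u v)
        + (Fintype.card α)^2 * (∑ u : β, ∑ v : β, H.dist u v) := by
    simp only [bpd]
    rw [Fintype.sum_prod_type]
    simp only [Fintype.sum_prod_type]
    simp only [Finset.sum_add_distrib, Finset.sum_const, Finset.card_univ, smul_eq_mul,
      Finset.mul_sum]
    ring_nf
  have hcardP : Fintype.card (α × β) = Fintype.card α * Fintype.card β :=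
    Fintype.card_prod _ _
  rw [hcardP, hD] at hA
  have h2nm : 2 ≤ Fintype.card α * Fintype.card β :=
    le_trans (by norm_num) (Nat.mul_le_mul hGcard hHcard)
  have hA' : (4:ℝ) * steinerWiener (G □ H) 3 =
      ((Fintype.card α : ℝ) * Fintype.card β - 2) *
        ((Fintype.card β : ℝ)^2 * (∑ u : α, ∑ v : α, (G.dist u v : ℝ))
          + (Fintype.card α : ℝ)^2 * (∑ u : β, ∑ v : β, (H.dist u v : ℝ))) := by
    have := congrArg (Nat.cast : ℕ → ℝ) hA
    push_cast [Nat.cast_sub h2nm] at this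
    convert this using 2 <;> push_cast <;> ring
  have hB' : (4:ℝ) * steinerWiener G 3 =
      ((Fintype.card α : ℝ) - 2) * (∑ u : α, ∑ v : α, (G.dist u v : ℝ)) := by
    have := congrArg (Nat.cast : ℕ → ℝ) hB
    push_cast [Nat.cast_sub (by omega : 2 ≤ Fintype.card α)] at this
    convert this using 2 <;> push_cast <;> ring
  have hC' : (4:ℝ) * steinerWiener H 3 =
      ((Fintype.card β : ℝ) - 2) * (∑ u : β, ∑ v : β, (H.dist u v : ℝ)) := by
    have := congrArg (Nat.cast : ℕ → ℝ) hC
    push_cast [Nat.cast_sub (by omega : 2 ≤ Fintype.card β)] at this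
    convert this using 2 <;> push_cast <;> ring
  set nr : ℝ := (Fintype.card α : ℝ) with hnr
  set mr : ℝ := (Fintype.card β : ℝ) with hmr
  set wG : ℝ := ∑ u : α, ∑ v : α, (G.dist u v : ℝ)
  set wH : ℝ := ∑ u : β, ∑ v : β, (H.dist u v : ℝ)
  have hn3 : (3:ℝ) ≤ nr := by rw [hnr]; exact_mod_cast hGcard
  have hm3 : (3:ℝ) ≤ mr := by rw [hmr]; exact_mod_cast hHcard
  have hnne : nr - 2 ≠ 0 := by linarith
  have hmne : mr - 2 ≠ 0 := by linarith
  have eSWP : (steinerWiener (G □ H) 3 : ℝ) = (nr * mr - 2) * (mr^2 * wG + nr^2 * wH) / 4 := by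
    linarith
  have eSWG : (steinerWiener G 3 : ℝ) = (nr - 2) * wG / 4 := by linarith
  have eSWH : (steinerWiener H 3 : ℝ) = (mr - 2) * wH / 4 := by linarith
  rw [eSWP, eSWG, eSWH]
  field_simp
  ring
end

section
/- Let G be a connected graph on n vertices and let r and k be integers with 2 ≤ r ≤ k − 1 and k ≤ n. Then μ_k(G) ≤ μ_r(G) + μ_{k+1−r}(G). -/
/-- The average `k`-Steiner distance of `G`: the average of the Steiner distances of
all `k`-element subsets of vertices of `G`. -/
noncomputable def avgSteinerDist {V : Type*} (G : SimpleGraph V) [Fintype V] (k : ℕ) : ℝ :=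
  (steinerWiener G k : ℝ) / ((Fintype.card V).choose k)

section SteinerAux

open Finset SimpleGraph

variable {V : Type*} (G : SimpleGraph V)

lemma steinerDist_le {S : Set V} {H : G.Subgraph} (hH : H.Connected)
    (hS : S ⊆ H.verts) : steinerDist G S ≤ H.edgeSet.ncard :=
  Nat.sInf_le ⟨H, hH, hS, rfl⟩

lemma top_subgraph_connected (hG : G.Connected) : (⊤ : G.Subgraph).Connected := by
  obtain ⟨v⟩ := hG.nonempty
  rw [SimpleGraph.Subgraph.connected_iff']
  haveI : Nonempty ((⊤ : G.Subgraph).verts) := ⟨⟨v, by simp⟩⟩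
  exact ⟨Subgraph.topIso.preconnected_iff.mpr hG.preconnected⟩

lemma exists_steiner_min [Fintype V] (hG : G.Connected) (S : Set V) :
    ∃ H : G.Subgraph, H.Connected ∧ S ⊆ H.verts ∧ H.edgeSet.ncard = steinerDist G S :=
  Nat.sInf_mem (⟨_, ⊤, top_subgraph_connected G hG, by simp [Subgraph.verts_top], rfl⟩ :
    {n | ∃ H : G.Subgraph, H.Connected ∧ S ⊆ H.verts ∧ H.edgeSet.ncard = n}.Nonempty)

lemma steinerDist_union_le [Fintype V] (hG : G.Connected) {A B : Set V}
    (h : (A ∩ B).Nonempty) :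
    steinerDist G (A ∪ B) ≤ steinerDist G A + steinerDist G B := by
  obtain ⟨H1, h1c, h1s, h1e⟩ := exists_steiner_min G hG A
  obtain ⟨H2, h2c, h2s, h2e⟩ := exists_steiner_min G hG B
  obtain ⟨v, hvA, hvB⟩ := h
  have hsup : (H1 ⊔ H2).Connected :=
    Subgraph.connected_sup h1c.preconnected h2c.preconnected ⟨v, h1s hvA, h2s hvB⟩
  have hsub : A ∪ B ⊆ (H1 ⊔ H2).verts := by
    rw [Subgraph.verts_sup]
    exact Set.union_subset (h1s.trans Set.subset_union_left)
      (h2s.trans Set.subset_union_right)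
  calc steinerDist G (A ∪ B) ≤ (H1 ⊔ H2).edgeSet.ncard := steinerDist_le G hsup hsub
    _ = (H1.edgeSet ∪ H2.edgeSet).ncard := by rw [Subgraph.edgeSet_sup]
    _ ≤ H1.edgeSet.ncard + H2.edgeSet.ncard := Set.ncard_union_le _ _
    _ = _ := by rw [h1e, h2e]

section Counting
variable {V : Type*} [Fintype V] [DecidableEq V]

/-- Index set of triples `(v, A, B)` with `A ∩ B = {v}`, `|A| = r`, `|B| = k+1-r`. -/
def steinerIdx (r k : ℕ) : Finset (V × Finset V × Finset V) :=
  univ.filter (fun x => x.2.1 ∩ x.2.2 = {x.1} ∧ x.2.1.card = r ∧ x.2.2.card = k + 1 - r)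

lemma mem_steinerIdx {r k : ℕ} {x : V × Finset V × Finset V} :
    x ∈ steinerIdx r k ↔ x.2.1 ∩ x.2.2 = {x.1} ∧ x.2.1.card = r ∧ x.2.2.card = k + 1 - r := by
  simp [steinerIdx]

lemma steinerIdx_mem_left {r k : ℕ} {x : V × Finset V × Finset V} (hx : x ∈ steinerIdx r k) :
    x.1 ∈ x.2.1 ∧ x.1 ∈ x.2.2 := by
  rw [mem_steinerIdx] at hx
  have : x.1 ∈ x.2.1 ∩ x.2.2 := by rw [hx.1]; exact mem_singleton_self _
  exact ⟨(mem_inter.mp this).1, (mem_inter.mp this).2⟩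

/-- Fiber of the union map over a `k`-set `S` has cardinality `r * C(k, r)`. -/
lemma card_fiber_union {r k : ℕ} (hr : 1 ≤ r) (hrk : r < k) {S : Finset V}
    (hS : S.card = k) :
    ((steinerIdx r k).filter (fun x => x.2.1 ∪ x.2.2 = S)).card = r * k.choose r := by
  have key : ((steinerIdx r k).filter (fun x => x.2.1 ∪ x.2.2 = S)).card
      = ((S.powersetCard r).sigma (fun A => A)).card := by
    refine Finset.card_bij' (fun x _ => ⟨x.2.1, x.1⟩)
      (fun p _ => (p.2, p.1, (S \ p.1) ∪ {p.2})) ?hi ?hj ?li ?ri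
    case hi =>
      rintro ⟨v, A, B⟩ hx
      dsimp only
      have hm := (mem_filter.mp hx).1
      have hU := (mem_filter.mp hx).2
      have hv := steinerIdx_mem_left hm
      rw [mem_steinerIdx] at hm
      exact mem_sigma.mpr ⟨mem_powersetCard.mpr
        ⟨by rw [← hU]; exact subset_union_left, hm.2.1⟩, hv.1⟩
    case hj =>
      rintro ⟨A, v⟩ hp
      dsimp only
      have hA := mem_powersetCard.mp (mem_sigma.mp hp).1
      have hv : v ∈ A := (mem_sigma.mp hp).2
      have hvS : v ∈ S := hA.1 hv
      have hnv : v ∉ S \ A := by simp [hv]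
      refine mem_filter.mpr ⟨mem_steinerIdx.mpr ⟨?_, hA.2, ?_⟩, ?_⟩
      · ext w
        simp only [mem_inter, mem_union, mem_sdiff, mem_singleton]
        constructor
        · rintro ⟨hwA, (⟨_, hw⟩ | hw)⟩
          · exact absurd hwA hw
          · exact hw
        · rintro rfl; exact ⟨hv, Or.inr rfl⟩
      · rw [union_comm, ← insert_eq, card_insert_of_notMem hnv,
          card_sdiff_of_subset hA.1, hA.2, hS]
        omega
      · ext w
        simp only [mem_union, mem_sdiff, mem_singleton]
        constructor
        · rintro (hw | ⟨hw, _⟩ | rfl) <;> first | exact hA.1 hw | exact hw | exact hvS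
        · intro hw
          by_cases hwA : w ∈ A
          · exact Or.inl hwA
          · exact Or.inr (Or.inl ⟨hw, hwA⟩)
    case li =>
      rintro ⟨v, A, B⟩ hx
      dsimp only
      have hm := (mem_filter.mp hx).1
      have hU := (mem_filter.mp hx).2
      have hv := steinerIdx_mem_left hm
      rw [mem_steinerIdx] at hm
      have hB : (S \ A) ∪ {v} = B := by
        ext w
        simp only [mem_union, mem_sdiff, mem_singleton]
        constructor
        · rintro (⟨hwS, hwA⟩ | rfl)
          · rw [← hU] at hwS
            rcases mem_union.mp hwS with h | h
            · exact absurd h hwA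
            · exact h
          · exact hv.2
        · intro hwB
          by_cases hwA : w ∈ A
          · have : w ∈ A ∩ B := mem_inter.mpr ⟨hwA, hwB⟩
            rw [hm.1, mem_singleton] at this
            exact Or.inr this
          · exact Or.inl ⟨by rw [← hU]; exact mem_union_right _ hwB, hwA⟩
      simp [hB]
    case ri => rintro ⟨A, v⟩ hp; rfl
  rw [key, Finset.card_sigma]
  have : ∀ A ∈ S.powersetCard r, A.card = r := fun A hA => (mem_powersetCard.mp hA).2
  rw [Finset.sum_congr rfl this, Finset.sum_const, card_powersetCard, hS, smul_eq_mul, mul_comm]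

/-- Fiber over a fixed first set `A` has cardinality `r * C(n-r, k-r)`. -/
lemma card_fiber_left {r k : ℕ} (hr : 1 ≤ r) (hrk : r < k) {A : Finset V}
    (hA : A.card = r) :
    ((steinerIdx r k).filter (fun x => x.2.1 = A)).card
      = r * (Fintype.card V - r).choose (k - r) := by
  have key : ((steinerIdx r k).filter (fun x => x.2.1 = A)).card
      = (A ×ˢ (Finset.univ \ A).powersetCard (k - r)).card := by
    refine Finset.card_bij' (fun x _ => (x.1, x.2.2.erase x.1))
      (fun p _ => (p.1, A, insert p.1 p.2)) ?hi ?hj ?li ?ri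
    case hi =>
      rintro ⟨v, A', B⟩ hx
      dsimp only
      have hm := (mem_filter.mp hx).1
      have hA' : A' = A := (mem_filter.mp hx).2
      have hv := steinerIdx_mem_left hm
      rw [mem_steinerIdx] at hm
      rw [← hA']
      refine mem_product.mpr ⟨hv.1, mem_powersetCard.mpr ⟨?_, ?_⟩⟩
      · intro w hw
        simp only [mem_erase] at hw
        simp only [mem_sdiff, mem_univ, true_and]
        intro hwA
        have : w ∈ A' ∩ B := mem_inter.mpr ⟨hwA, hw.2⟩
        rw [show A' ∩ B = {v} from hm.1, mem_singleton] at this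
        exact hw.1 this
      · rw [card_erase_of_mem hv.2, hm.2.2]; omega
    case hj =>
      rintro ⟨v, B'⟩ hp
      dsimp only
      have hv : v ∈ A := (mem_product.mp hp).1
      have hB' := mem_powersetCard.mp (mem_product.mp hp).2
      have hvB' : v ∉ B' := fun h => (mem_sdiff.mp (hB'.1 h)).2 hv
      refine mem_filter.mpr ⟨mem_steinerIdx.mpr ⟨?_, hA, ?_⟩, rfl⟩
      · ext w
        simp only [mem_inter, mem_insert, mem_singleton]
        constructor
        · rintro ⟨hwA, (rfl | hw)⟩
          · rfl
          · exact absurd hwA (mem_sdiff.mp (hB'.1 hw)).2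
        · rintro rfl; exact ⟨hv, Or.inl rfl⟩
      · rw [card_insert_of_notMem hvB', hB'.2]; omega
    case li =>
      rintro ⟨v, A', B⟩ hx
      dsimp only
      have hm := (mem_filter.mp hx).1
      have hA' : A' = A := (mem_filter.mp hx).2
      have hv := steinerIdx_mem_left hm
      rw [insert_erase hv.2, hA']
    case ri =>
      rintro ⟨v, B'⟩ hp
      dsimp only
      have hv : v ∈ A := (mem_product.mp hp).1
      have hB' := mem_powersetCard.mp (mem_product.mp hp).2
      have hvB' : v ∉ B' := fun h => (mem_sdiff.mp (hB'.1 h)).2 hv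
      rw [erase_insert hvB']
  rw [key, card_product, hA, card_powersetCard, card_sdiff_of_subset (subset_univ A), hA, card_univ]

/-- Fiber over a fixed second set `B` has cardinality `(k+1-r) * C(n-(k+1-r), r-1)`. -/
lemma card_fiber_right {r k : ℕ} (hr : 1 ≤ r) (hrk : r < k) {B : Finset V}
    (hB : B.card = k + 1 - r) :
    ((steinerIdx r k).filter (fun x => x.2.2 = B)).card
      = (k + 1 - r) * (Fintype.card V - (k + 1 - r)).choose (r - 1) := by
  have key : ((steinerIdx r k).filter (fun x => x.2.2 = B)).card
      = (B ×ˢ (Finset.univ \ B).powersetCard (r - 1)).card := by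
    refine Finset.card_bij' (fun x _ => (x.1, x.2.1.erase x.1))
      (fun p _ => (p.1, insert p.1 p.2, B)) ?hi ?hj ?li ?ri
    case hi =>
      rintro ⟨v, A, B'⟩ hx
      dsimp only
      have hm := (mem_filter.mp hx).1
      have hB' : B' = B := (mem_filter.mp hx).2
      have hv := steinerIdx_mem_left hm
      rw [mem_steinerIdx] at hm
      rw [← hB']
      refine mem_product.mpr ⟨hv.2, mem_powersetCard.mpr ⟨?_, ?_⟩⟩
      · intro w hw
        simp only [mem_erase] at hw
        simp only [mem_sdiff, mem_univ, true_and]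
        intro hwB
        have : w ∈ A ∩ B' := mem_inter.mpr ⟨hw.2, hwB⟩
        rw [show A ∩ B' = {v} from hm.1, mem_singleton] at this
        exact hw.1 this
      · rw [card_erase_of_mem hv.1, hm.2.1]
    case hj =>
      rintro ⟨v, A'⟩ hp
      dsimp only
      have hv : v ∈ B := (mem_product.mp hp).1
      have hA' := mem_powersetCard.mp (mem_product.mp hp).2
      have hvA' : v ∉ A' := fun h => (mem_sdiff.mp (hA'.1 h)).2 hv
      refine mem_filter.mpr ⟨mem_steinerIdx.mpr ⟨?_, ?_, hB⟩, rfl⟩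
      · ext w
        simp only [mem_inter, mem_insert, mem_singleton]
        constructor
        · rintro ⟨(rfl | hw), hwB⟩
          · rfl
          · exact absurd hwB (mem_sdiff.mp (hA'.1 hw)).2
        · rintro rfl; exact ⟨Or.inl rfl, hv⟩
      · rw [card_insert_of_notMem hvA', hA'.2]; omega
    case li =>
      rintro ⟨v, A, B'⟩ hx
      dsimp only
      have hm := (mem_filter.mp hx).1
      have hB' : B' = B := (mem_filter.mp hx).2
      have hv := steinerIdx_mem_left hm
      rw [insert_erase hv.1, hB']
    case ri =>
      rintro ⟨v, A'⟩ hp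
      dsimp only
      have hv : v ∈ B := (mem_product.mp hp).1
      have hA' := mem_powersetCard.mp (mem_product.mp hp).2
      have hvA' : v ∉ A' := fun h => (mem_sdiff.mp (hA'.1 h)).2 hv
      rw [erase_insert hvA']
  rw [key, card_product, hB, card_powersetCard, card_sdiff_of_subset (subset_univ B), hB, card_univ]


lemma wiener_counting {r k : ℕ} (G : SimpleGraph V) (hG : G.Connected) (hr : 1 ≤ r) (hrk : r < k) :
    (r * k.choose r) * steinerWiener G k ≤
      (r * (Fintype.card V - r).choose (k - r)) * steinerWiener G r
        + ((k + 1 - r) * (Fintype.card V - (k + 1 - r)).choose (r - 1))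
          * steinerWiener G (k + 1 - r) := by
  have hmU : ∀ x ∈ steinerIdx (V := V) r k, x.2.1 ∪ x.2.2 ∈ univ.powersetCard k := by
    intro x hx
    rw [mem_steinerIdx] at hx
    have hc := Finset.card_union_add_card_inter x.2.1 x.2.2
    rw [hx.1, card_singleton, hx.2.1, hx.2.2] at hc
    rw [mem_powersetCard_univ]
    omega
  have hmA : ∀ x ∈ steinerIdx (V := V) r k, x.2.1 ∈ univ.powersetCard r := fun x hx =>
    mem_powersetCard_univ.mpr (mem_steinerIdx.mp hx).2.1
  have hmB : ∀ x ∈ steinerIdx (V := V) r k, x.2.2 ∈ univ.powersetCard (k + 1 - r) := fun x hx =>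
    mem_powersetCard_univ.mpr (mem_steinerIdx.mp hx).2.2
  have key1 : ∑ x ∈ steinerIdx (V := V) r k, steinerDist G ↑(x.2.1 ∪ x.2.2)
      = (r * k.choose r) * steinerWiener G k := by
    rw [← Finset.sum_fiberwise_of_maps_to hmU (fun x => steinerDist G ↑(x.2.1 ∪ x.2.2)),
      steinerWiener, Finset.mul_sum]
    refine Finset.sum_congr rfl fun S hS => ?_
    rw [Finset.sum_congr rfl (fun x hx => by rw [(mem_filter.mp hx).2] :
        ∀ x ∈ (steinerIdx (V := V) r k).filter (fun x => x.2.1 ∪ x.2.2 = S),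
          steinerDist G ↑(x.2.1 ∪ x.2.2) = steinerDist G ↑S),
      Finset.sum_const, card_fiber_union hr hrk (mem_powersetCard_univ.mp hS), smul_eq_mul]
  have key2 : ∑ x ∈ steinerIdx (V := V) r k, steinerDist G ↑x.2.1
      = (r * (Fintype.card V - r).choose (k - r)) * steinerWiener G r := by
    rw [← Finset.sum_fiberwise_of_maps_to hmA (fun x => steinerDist G ↑x.2.1),
      steinerWiener, Finset.mul_sum]
    refine Finset.sum_congr rfl fun A hA => ?_
    rw [Finset.sum_congr rfl (fun x hx => by rw [(mem_filter.mp hx).2] :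
        ∀ x ∈ (steinerIdx (V := V) r k).filter (fun x => x.2.1 = A),
          steinerDist G ↑x.2.1 = steinerDist G ↑A),
      Finset.sum_const, card_fiber_left hr hrk (mem_powersetCard_univ.mp hA), smul_eq_mul]
  have key3 : ∑ x ∈ steinerIdx (V := V) r k, steinerDist G ↑x.2.2
      = ((k + 1 - r) * (Fintype.card V - (k + 1 - r)).choose (r - 1))
          * steinerWiener G (k + 1 - r) := by
    rw [← Finset.sum_fiberwise_of_maps_to hmB (fun x => steinerDist G ↑x.2.2),
      steinerWiener, Finset.mul_sum]
    refine Finset.sum_congr rfl fun B hB => ?_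
    rw [Finset.sum_congr rfl (fun x hx => by rw [(mem_filter.mp hx).2] :
        ∀ x ∈ (steinerIdx (V := V) r k).filter (fun x => x.2.2 = B),
          steinerDist G ↑x.2.2 = steinerDist G ↑B),
      Finset.sum_const, card_fiber_right hr hrk (mem_powersetCard_univ.mp hB), smul_eq_mul]
  calc (r * k.choose r) * steinerWiener G k
      = ∑ x ∈ steinerIdx (V := V) r k, steinerDist G ↑(x.2.1 ∪ x.2.2) := key1.symm
    _ ≤ ∑ x ∈ steinerIdx (V := V) r k,
          (steinerDist G ↑x.2.1 + steinerDist G ↑x.2.2) := by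
        refine Finset.sum_le_sum fun x hx => ?_
        have hv := steinerIdx_mem_left hx
        rw [Finset.coe_union]
        exact steinerDist_union_le G hG
          ⟨x.1, Set.mem_inter (by exact_mod_cast hv.1) (by exact_mod_cast hv.2)⟩
    _ = _ := by rw [Finset.sum_add_distrib, key2, key3]
end Counting

end SteinerAux

/-- For a connected graph `G` on `n` vertices and integers `2 ≤ r ≤ k − 1` with
`k ≤ n`, the average Steiner distances satisfy `μ_k(G) ≤ μ_r(G) + μ_{k+1−r}(G)`. -/
theorem avgSteinerDist_le_add {V : Type*} (G : SimpleGraph V) [Fintype V]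
    (hG : G.Connected) (r k : ℕ) (hr : 2 ≤ r) (hrk : r ≤ k - 1)
    (hk : k ≤ Fintype.card V) :
    avgSteinerDist G k ≤ avgSteinerDist G r + avgSteinerDist G (k + 1 - r) := by
  classical
  set n := Fintype.card V with hn
  have hk3 : 3 ≤ k := by omega
  have hrk' : r < k := by omega
  have hr1 : 1 ≤ r := by omega
  set s := k + 1 - r with hs
  have hsk : s ≤ k := by omega
  have hks : k - s = r - 1 := by omega
  set c1 := r * k.choose r with hc1
  set c2 := r * (n - r).choose (k - r) with hc2
  set c3 := s * (n - s).choose (r - 1) with hc3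
  have hineq : c1 * steinerWiener G k ≤ c2 * steinerWiener G r + c3 * steinerWiener G s :=
    wiener_counting G hG hr1 hrk'
  have hid1 : c2 * n.choose r = c1 * n.choose k := by
    rw [hc1, hc2, mul_assoc, mul_assoc, mul_comm ((n - r).choose (k - r)), ← Nat.choose_mul hrk'.le,
      mul_comm (n.choose k)]
  have hid2 : c3 * n.choose s = c1 * n.choose k := by
    have h1 : n.choose k * k.choose s = n.choose s * (n - s).choose (r - 1) := by
      rw [Nat.choose_mul hsk, hks]
    have h2 : k.choose s = k.choose (r - 1) := by
      rw [show s = k - (r - 1) by omega, Nat.choose_symm (by omega)]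
    have h3 : k.choose r * r = k.choose (r - 1) * s := by
      conv_lhs => rw [show r = (r - 1) + 1 by omega]
      rw [Nat.choose_succ_right_eq, show k - (r - 1) = s by omega]
    calc c3 * n.choose s = s * (n.choose s * (n - s).choose (r - 1)) := by rw [hc3]; ring
      _ = s * (n.choose k * k.choose s) := by rw [h1]
      _ = (k.choose (r - 1) * s) * n.choose k := by rw [h2]; ring
      _ = (k.choose r * r) * n.choose k := by rw [h3]
      _ = c1 * n.choose k := by rw [hc1]; ring
  have hc1pos : 0 < c1 := Nat.mul_pos (by omega) (Nat.choose_pos hrk'.le)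
  have hnk : 0 < n.choose k := Nat.choose_pos hk
  have hnr : 0 < n.choose r := Nat.choose_pos (by omega)
  have hns : 0 < n.choose s := Nat.choose_pos (by omega)
  have hc2pos : 0 < c2 := by
    by_contra h
    push_neg at h
    interval_cases c2
    · simp at hid1; omega
  have hc3pos : 0 < c3 := by
    by_contra h
    push_neg at h
    interval_cases c3
    · simp at hid2; omega
  have hDpos : (0 : ℝ) < (c1 * n.choose k : ℕ) := by
    exact_mod_cast Nat.mul_pos hc1pos hnk
  have e1 : avgSteinerDist G k = ((c1 * steinerWiener G k : ℕ) : ℝ) / ((c1 * n.choose k : ℕ) : ℝ) := by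
    unfold avgSteinerDist
    push_cast
    rw [mul_div_mul_left _ _ (by exact_mod_cast hc1pos.ne' : (c1 : ℝ) ≠ 0)]
  have e2 : avgSteinerDist G r = ((c2 * steinerWiener G r : ℕ) : ℝ) / ((c1 * n.choose k : ℕ) : ℝ) := by
    rw [← hid1]
    unfold avgSteinerDist
    push_cast
    rw [mul_div_mul_left _ _ (by exact_mod_cast hc2pos.ne' : (c2 : ℝ) ≠ 0)]
  have e3 : avgSteinerDist G s = ((c3 * steinerWiener G s : ℕ) : ℝ) / ((c1 * n.choose k : ℕ) : ℝ) := by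
    rw [← hid2]
    unfold avgSteinerDist
    push_cast
    rw [mul_div_mul_left _ _ (by exact_mod_cast hc3pos.ne' : (c3 : ℝ) ≠ 0)]
  rw [e1, e2, e3, ← add_div]
  gcongr
  exact_mod_cast hineq
end
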